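/- Let q ≥ 1 and n > 2q + 3. Let D = (d_{ij}) be a symmetric n×n real matrix with nonnegative entries, zero diagonal, and rank(D) ≤ q + 2. Set w_{ij} = exp(-d_{ij}) and, for z_1,…,z_n ∈ ℝ^q, let S_Z have entries s_{ij} = -‖z_i - z_j‖². Then there exist z_1,…,z_n ∈ ℝ^q with L_W(S_Z) = H(W) if and only if there exist points p_1,…,p_n ∈ ℝ^q with ‖p_i - p_j‖² = d_{ij} for all i, j. Moreover, every embedding Z attaining the bound satisfies ‖z_i - z_j‖² = d_{ij} for all i, j, and any two embeddings Z, Z' attaining the bound differ by a Euclidean isometry: there is an isometry f of ℝ^q with z'_i = f(z_i) for all i. -/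

import Mathlib

open scoped BigOperators

/-- The weighted InfoNCE loss. -/
noncomputable def infoNCE {n : ℕ} (W S : Matrix (Fin n) (Fin n) ℝ) : ℝ :=
  -(1 / (n : ℝ)) * ∑ i : Fin n, ∑ j ∈ Finset.univ.erase i,
    (W i j / ∑ k ∈ Finset.univ.erase i, W i k) *
      Real.log (Real.exp (S i j) / ∑ k ∈ Finset.univ.erase i, Real.exp (S i k))

/-- The entropic lower bound (with the convention `0 * log 0 = 0`,
which holds automatically since `Real.log 0 = 0`). -/
noncomputable def entropicBound {n : ℕ} (W : Matrix (Fin n) (Fin n) ℝ) : ℝ :=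
  -(1 / (n : ℝ)) * ∑ i : Fin n, ∑ j ∈ Finset.univ.erase i,
    (W i j / ∑ k ∈ Finset.univ.erase i, W i k) *
      Real.log (W i j / ∑ k ∈ Finset.univ.erase i, W i k)


/-- Weight matrix `w_{ij} = exp(-d_{ij})`. -/
noncomputable def Wexp {n : ℕ} (D : Matrix (Fin n) (Fin n) ℝ) : Matrix (Fin n) (Fin n) ℝ :=
  Matrix.of fun i j => Real.exp (-(D i j))

/-- Latent similarity matrix `s_{ij} = -‖z_i - z_j‖²`. -/
noncomputable def SEucl {n q : ℕ} (z : Fin n → EuclideanSpace ℝ (Fin q)) :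
    Matrix (Fin n) (Fin n) ℝ :=
  Matrix.of fun i j => -‖z i - z j‖ ^ 2

section Aux

open Finset Module

lemma gibbs_term_le {p q : ℝ} (hp : 0 < p) (hq : 0 < q) :
    p * Real.log q - p * Real.log p ≤ q - p := by
  have h1 : Real.log (q / p) ≤ q / p - 1 := Real.log_le_sub_one_of_pos (by positivity)
  have h2 : Real.log (q / p) = Real.log q - Real.log p := Real.log_div hq.ne' hp.ne'
  have := mul_le_mul_of_nonneg_left h1 hp.le
  rw [h2] at this
  have h3 : p * (q / p - 1) = q - p := by field_simp
  nlinarith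

lemma gibbs_term_eq {p q : ℝ} (hp : 0 < p) (hq : 0 < q)
    (h : p * Real.log q - p * Real.log p = q - p) : q = p := by
  by_contra hne
  have h1 : Real.log (q / p) < q / p - 1 :=
    Real.log_lt_sub_one_of_pos (by positivity) (by
      intro hqp
      exact hne (by field_simp at hqp; linarith))
  have h2 : Real.log (q / p) = Real.log q - Real.log p := Real.log_div hq.ne' hp.ne'
  have := mul_lt_mul_of_pos_left h1 hp
  rw [h2] at this
  have h3 : p * (q / p - 1) = q - p := by field_simp
  nlinarith

lemma gibbs_sum_le {ι : Type*} (t : Finset ι) (p q : ι → ℝ)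
    (hp : ∀ j ∈ t, 0 < p j) (hq : ∀ j ∈ t, 0 < q j)
    (hsum : ∑ j ∈ t, p j = ∑ j ∈ t, q j) :
    ∑ j ∈ t, p j * Real.log (q j) ≤ ∑ j ∈ t, p j * Real.log (p j) := by
  have h : ∑ j ∈ t, (p j * Real.log (q j) - p j * Real.log (p j)) ≤ ∑ j ∈ t, (q j - p j) :=
    Finset.sum_le_sum fun j hj => gibbs_term_le (hp j hj) (hq j hj)
  rw [Finset.sum_sub_distrib] at h
  rw [Finset.sum_sub_distrib] at h
  linarith

lemma gibbs_sum_eq {ι : Type*} (t : Finset ι) (p q : ι → ℝ)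
    (hp : ∀ j ∈ t, 0 < p j) (hq : ∀ j ∈ t, 0 < q j)
    (hsum : ∑ j ∈ t, p j = ∑ j ∈ t, q j)
    (heq : ∑ j ∈ t, p j * Real.log (q j) = ∑ j ∈ t, p j * Real.log (p j)) :
    ∀ j ∈ t, q j = p j := by
  have hterm : ∀ j ∈ t, 0 ≤ (q j - p j) - (p j * Real.log (q j) - p j * Real.log (p j)) :=
    fun j hj => sub_nonneg.2 (gibbs_term_le (hp j hj) (hq j hj))
  have hzero : ∑ j ∈ t, ((q j - p j) - (p j * Real.log (q j) - p j * Real.log (p j))) = 0 := by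
    simp only [Finset.sum_sub_distrib]
    linarith
  have := (Finset.sum_eq_zero_iff_of_nonneg hterm).1 hzero
  intro j hj
  have hj' := this j hj
  exact gibbs_term_eq (hp j hj) (hq j hj) (by linarith)

lemma attains_iff {n : ℕ} (hn : 2 ≤ n) (W S : Matrix (Fin n) (Fin n) ℝ)
    (hW : ∀ i j : Fin n, 0 < W i j) :
    infoNCE W S = entropicBound W ↔
      ∀ i : Fin n, ∀ j ∈ Finset.univ.erase i,
        Real.exp (S i j) / (∑ k ∈ Finset.univ.erase i, Real.exp (S i k)) =
        W i j / (∑ k ∈ Finset.univ.erase i, W i k) := by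
  have hnt : Nontrivial (Fin n) := Fin.nontrivial_iff_two_le.mpr hn
  have hne : ∀ i : Fin n, (Finset.univ.erase i).Nonempty := by
    intro i
    obtain ⟨j, hj⟩ := exists_ne i
    exact ⟨j, Finset.mem_erase.2 ⟨hj, Finset.mem_univ j⟩⟩
  set A : Fin n → ℝ := fun i => ∑ k ∈ Finset.univ.erase i, W i k with hA
  set B : Fin n → ℝ := fun i => ∑ k ∈ Finset.univ.erase i, Real.exp (S i k) with hB
  have hApos : ∀ i, 0 < A i := fun i =>
    Finset.sum_pos (fun k _ => hW i k) (hne i)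
  have hBpos : ∀ i, 0 < B i := fun i =>
    Finset.sum_pos (fun k _ => Real.exp_pos _) (hne i)
  set p : Fin n → Fin n → ℝ := fun i j => W i j / A i with hp
  set q : Fin n → Fin n → ℝ := fun i j => Real.exp (S i j) / B i with hq
  have hppos : ∀ i j, 0 < p i j := fun i j => div_pos (hW i j) (hApos i)
  have hqpos : ∀ i j, 0 < q i j := fun i j => div_pos (Real.exp_pos _) (hBpos i)
  have hsump : ∀ i, ∑ j ∈ Finset.univ.erase i, p i j = 1 := by
    intro i; rw [hp]; simp only [← Finset.sum_div]; exact div_self (hApos i).ne'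
  have hsumq : ∀ i, ∑ j ∈ Finset.univ.erase i, q i j = 1 := by
    intro i; rw [hq]; simp only [← Finset.sum_div]; exact div_self (hBpos i).ne'
  set g : Fin n → ℝ := fun i =>
    (∑ j ∈ Finset.univ.erase i, p i j * Real.log (p i j)) -
    (∑ j ∈ Finset.univ.erase i, p i j * Real.log (q i j)) with hg
  have hgnn : ∀ i, 0 ≤ g i := by
    intro i
    have := gibbs_sum_le (Finset.univ.erase i) (p i) (q i)
      (fun j _ => hppos i j) (fun j _ => hqpos i j)
      (by rw [hsump i, hsumq i])
    simp only [hg]; linarith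
  have hdiff : infoNCE W S - entropicBound W = (1 / (n : ℝ)) * ∑ i : Fin n, g i := by
    simp only [infoNCE, entropicBound, hg, Finset.sum_sub_distrib]
    ring
  have hn0 : (0:ℝ) < (n : ℝ) := by positivity
  constructor
  · intro h
    have hsum0 : ∑ i : Fin n, g i = 0 := by
      have : (1 / (n : ℝ)) * ∑ i : Fin n, g i = 0 := by rw [← hdiff, h]; ring
      field_simp at this
      simpa using this
    have hgi : ∀ i ∈ Finset.univ, g i = 0 :=
      (Finset.sum_eq_zero_iff_of_nonneg (fun i _ => hgnn i)).1 hsum0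
    intro i j hj
    exact gibbs_sum_eq (Finset.univ.erase i) (p i) (q i)
      (fun j _ => hppos i j) (fun j _ => hqpos i j)
      (by rw [hsump i, hsumq i])
      (by have := hgi i (Finset.mem_univ i); simp only [hg] at this; linarith) j hj
  · intro h
    have : ∀ i, g i = 0 := by
      intro i
      simp only [hg]
      have : ∀ j ∈ Finset.univ.erase i, p i j * Real.log (q i j) = p i j * Real.log (p i j) := by
        intro j hj; rw [show q i j = p i j from h i j hj]
      rw [Finset.sum_congr rfl this]
      ring
    have : infoNCE W S - entropicBound W = 0 := by
      rw [hdiff, Finset.sum_congr rfl (fun i _ => this i)]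
      simp
    linarith

lemma c_eq_zero {n q : ℕ} (hn : 2 * q + 3 < n) (D : Matrix (Fin n) (Fin n) ℝ)
    (hDdiag : ∀ i : Fin n, D i i = 0) (hrank : D.rank ≤ q + 2)
    (z : Fin n → EuclideanSpace ℝ (Fin q)) (c : ℝ)
    (hE : ∀ i j : Fin n, i ≠ j → ‖z i - z j‖ ^ 2 = D i j - c) : c = 0 := by
  by_contra hc
  have hD' : ∀ i j : Fin n, D i j =
      ‖z i - z j‖ ^ 2 + c - (if i = j then c else 0) := by
    intro i j
    by_cases h : i = j
    · subst h; simp [hDdiag i]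
    · rw [hE i j h]; simp [h]
  let φ₁ : (Fin n → ℝ) →ₗ[ℝ] ℝ := Fintype.linearCombination ℝ (fun _ : Fin n => (1:ℝ))
  let φ₂ : (Fin n → ℝ) →ₗ[ℝ] EuclideanSpace ℝ (Fin q) := Fintype.linearCombination ℝ z
  let φ := φ₁.prod φ₂
  have hφ1 : ∀ v : Fin n → ℝ, φ₁ v = ∑ i, v i := by
    intro v; simp [φ₁, Fintype.linearCombination_apply]
  have hφ2 : ∀ v : Fin n → ℝ, φ₂ v = ∑ i, v i • z i := by
    intro v; simp [φ₂, Fintype.linearCombination_apply]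
  have key : ∀ v : Fin n → ℝ, (∑ i, v i) = 0 → (∑ i, v i • z i) = 0 →
      ∑ i, ∑ j, v i * (D i j * v j) = -c * ∑ i, v i ^ 2 := by
    intro v hσ hm
    have hz : ∀ i, ∑ j, v j * (inner ℝ (z i) (z j) : ℝ) = 0 := by
      intro i
      have h1 : (inner ℝ (z i) (∑ j, v j • z j) : ℝ) = ∑ j, v j * inner ℝ (z i) (z j) := by
        rw [inner_sum]
        exact Finset.sum_congr rfl fun j _ => real_inner_smul_right _ _ _
      rw [← h1, hm, inner_zero_right]
    have row : ∀ i, ∑ j, D i j * v j = (∑ j, v j * ‖z j‖ ^ 2) - c * v i := by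
      intro i
      have expand : ∀ j, D i j * v j =
          ‖z i‖ ^ 2 * v j + v j * ‖z j‖ ^ 2 - 2 * (v j * (inner ℝ (z i) (z j) : ℝ))
            + c * v j - (if i = j then c * v j else 0) := by
        intro j
        rw [hD' i j]
        have hns : ‖z i - z j‖ ^ 2 = ‖z i‖ ^ 2 - 2 * (inner ℝ (z i) (z j) : ℝ) + ‖z j‖ ^ 2 :=
          norm_sub_sq_real _ _
        rw [hns]
        by_cases h : i = j <;> simp [h] <;> ring
      rw [Finset.sum_congr rfl (fun j _ => expand j)]
      simp only [Finset.sum_add_distrib, Finset.sum_sub_distrib, ← Finset.mul_sum]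
      rw [hσ, hz i, Finset.sum_ite_eq Finset.univ i (fun j => c * v j)]
      simp
    calc ∑ i, ∑ j, v i * (D i j * v j)
        = ∑ i, v i * ((∑ j, v j * ‖z j‖ ^ 2) - c * v i) := by
          refine Finset.sum_congr rfl fun i _ => ?_
          rw [← Finset.mul_sum, row i]
      _ = (∑ i, v i) * (∑ j, v j * ‖z j‖ ^ 2) - c * ∑ i, v i ^ 2 := by
          simp only [mul_sub, Finset.sum_sub_distrib]
          congr 1
          · rw [← Finset.sum_mul]
          · rw [Finset.mul_sum]
            exact Finset.sum_congr rfl fun i _ => by ring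
      _ = -c * ∑ i, v i ^ 2 := by rw [hσ]; ring
  have hinj : ∀ v : Fin n → ℝ, v ∈ LinearMap.ker φ → D.mulVec v = 0 → v = 0 := by
    intro v hv hDv
    have hσ : (∑ i, v i) = 0 := by
      have := congrArg Prod.fst (LinearMap.mem_ker.1 hv)
      simpa [φ, hφ1] using this
    have hm : (∑ i, v i • z i) = 0 := by
      have := congrArg Prod.snd (LinearMap.mem_ker.1 hv)
      simpa [φ, hφ2] using this
    have hdot : ∑ i, ∑ j, v i * (D i j * v j) = 0 := by
      have hrow0 : ∀ i, (∑ j, D i j * v j) = 0 := by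
        intro i
        have := congrFun hDv i
        simpa [Matrix.mulVec, dotProduct] using this
      refine Finset.sum_eq_zero fun i _ => ?_
      rw [← Finset.mul_sum, hrow0 i, mul_zero]
    have hkey := key v hσ hm
    rw [hdot] at hkey
    have hsq : ∑ i, v i ^ 2 = 0 := by
      rcases mul_eq_zero.1 hkey.symm with h | h
      · exact absurd (neg_eq_zero.1 h) hc
      · exact h
    funext i
    have := (Finset.sum_eq_zero_iff_of_nonneg (fun i _ => sq_nonneg (v i))).1 hsq i
      (Finset.mem_univ i)
    exact pow_eq_zero_iff (by norm_num) |>.1 this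
  have hdisj : LinearMap.ker D.mulVecLin ⊓ LinearMap.ker φ = ⊥ := by
    rw [Submodule.eq_bot_iff]
    intro v hv
    exact hinj v hv.2 (by simpa [Matrix.mulVecLin_apply] using LinearMap.mem_ker.1 hv.1)
  have e1 : D.rank + finrank ℝ (LinearMap.ker D.mulVecLin) = n := by
    have := LinearMap.finrank_range_add_finrank_ker D.mulVecLin
    rwa [Module.finrank_fintype_fun_eq_card, Fintype.card_fin] at this
  have e2 : finrank ℝ (LinearMap.range φ) + finrank ℝ (LinearMap.ker φ) = n := by
    have := LinearMap.finrank_range_add_finrank_ker φ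
    rwa [Module.finrank_fintype_fun_eq_card, Fintype.card_fin] at this
  have e3 : finrank ℝ (LinearMap.range φ) ≤ q + 1 := by
    have h1 := Submodule.finrank_le (LinearMap.range φ)
    have h2 : finrank ℝ (ℝ × EuclideanSpace ℝ (Fin q)) = 1 + q := by
      rw [Module.finrank_prod, finrank_self, finrank_euclideanSpace_fin]
    omega
  have e4 : finrank ℝ (LinearMap.ker D.mulVecLin) + finrank ℝ (LinearMap.ker φ) ≤ n := by
    have h6 := Submodule.finrank_sup_add_finrank_inf_eq (LinearMap.ker D.mulVecLin)
      (LinearMap.ker φ)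
    rw [hdisj] at h6
    have h5 := Submodule.finrank_le (LinearMap.ker D.mulVecLin ⊔ LinearMap.ker φ)
    rw [Module.finrank_fintype_fun_eq_card, Fintype.card_fin] at h5
    simp only [finrank_bot, add_zero] at h6
    omega
  omega

lemma exists_isometry_of_dist_eq {n q : ℕ} (hn : 0 < n)
    (z z' : Fin n → EuclideanSpace ℝ (Fin q))
    (hd : ∀ i j : Fin n, ‖z' i - z' j‖ = ‖z i - z j‖) :
    ∃ f : EuclideanSpace ℝ (Fin q) ≃ᵢ EuclideanSpace ℝ (Fin q),
      ∀ i : Fin n, z' i = f (z i) := by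
  let i₀ : Fin n := ⟨0, hn⟩
  set v : Fin n → EuclideanSpace ℝ (Fin q) := fun i => z i - z i₀ with hv
  set v' : Fin n → EuclideanSpace ℝ (Fin q) := fun i => z' i - z' i₀ with hv'
  have hvdiff : ∀ i j, v i - v j = z i - z j := fun i j => sub_sub_sub_cancel_right _ _ _
  have hvdiff' : ∀ i j, v' i - v' j = z' i - z' j := fun i j => sub_sub_sub_cancel_right _ _ _
  have hvinner : ∀ i j, (inner ℝ (v' i) (v' j) : ℝ) = inner ℝ (v i) (v j) := by
    intro i j
    have h1 : ‖v i - v j‖ ^ 2 = ‖v i‖ ^ 2 - 2 * (inner ℝ (v i) (v j) : ℝ) + ‖v j‖ ^ 2 :=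
      norm_sub_sq_real _ _
    have h2 : ‖v' i - v' j‖ ^ 2 = ‖v' i‖ ^ 2 - 2 * (inner ℝ (v' i) (v' j) : ℝ) + ‖v' j‖ ^ 2 :=
      norm_sub_sq_real _ _
    rw [hvdiff] at h1
    rw [hvdiff'] at h2
    have e1 : ‖v' i‖ = ‖v i‖ := hd i i₀
    have e2 : ‖v' j‖ = ‖v j‖ := hd j i₀
    have e3 : ‖z' i - z' j‖ = ‖z i - z j‖ := hd i j
    rw [e1, e2, e3] at h2
    linarith
  let L : (Fin n → ℝ) →ₗ[ℝ] EuclideanSpace ℝ (Fin q) := Fintype.linearCombination ℝ v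
  let L' : (Fin n → ℝ) →ₗ[ℝ] EuclideanSpace ℝ (Fin q) := Fintype.linearCombination ℝ v'
  have hLapp : ∀ a, L a = ∑ i, a i • v i := by
    intro a; simp [L, Fintype.linearCombination_apply]
  have hLapp' : ∀ a, L' a = ∑ i, a i • v' i := by
    intro a; simp [L', Fintype.linearCombination_apply]
  have hinner_expand : ∀ (w : Fin n → EuclideanSpace ℝ (Fin q)) (a b : Fin n → ℝ),
      (inner ℝ (∑ i, a i • w i) (∑ j, b j • w j) : ℝ)
        = ∑ i, ∑ j, a i * (b j * inner ℝ (w i) (w j)) := by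
    intro w a b
    rw [sum_inner]
    refine Finset.sum_congr rfl fun i _ => ?_
    rw [real_inner_smul_left, inner_sum, Finset.mul_sum]
    refine Finset.sum_congr rfl fun j _ => ?_
    rw [real_inner_smul_right]
  have hLnorm : ∀ a, ‖L' a‖ = ‖L a‖ := by
    intro a
    have h1 : (inner ℝ (L' a) (L' a) : ℝ) = inner ℝ (L a) (L a) := by
      rw [hLapp, hLapp', hinner_expand, hinner_expand]
      exact Finset.sum_congr rfl fun i _ => Finset.sum_congr rfl fun j _ => by
        rw [hvinner i j]
    have h2 := real_inner_self_eq_norm_sq (L' a)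
    have h3 := real_inner_self_eq_norm_sq (L a)
    nlinarith [norm_nonneg (L' a), norm_nonneg (L a)]
  have hker : LinearMap.ker L = LinearMap.ker L' := by
    ext a
    simp only [LinearMap.mem_ker]
    constructor
    · intro h; have := hLnorm a; rw [h, norm_zero] at this; exact norm_eq_zero.1 this
    · intro h
      have := hLnorm a; rw [h, norm_zero] at this; exact norm_eq_zero.1 this.symm
  let T : LinearMap.range L ≃ₗ[ℝ] LinearMap.range L' :=
    L.quotKerEquivRange.symm.trans ((Submodule.quotEquivOfEq _ _ hker).trans
      L'.quotKerEquivRange)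
  have hT : ∀ a : Fin n → ℝ,
      (T ⟨L a, LinearMap.mem_range_self L a⟩ : EuclideanSpace ℝ (Fin q)) = L' a := by
    intro a
    have h1 : L.quotKerEquivRange.symm ⟨L a, LinearMap.mem_range_self L a⟩
        = Submodule.Quotient.mk a := L.quotKerEquivRange_symm_apply_image a _
    simp only [T, LinearEquiv.trans_apply, h1]
    rw [Submodule.quotEquivOfEq_mk]
    exact L'.quotKerEquivRange_apply_mk a
  let σ : LinearMap.range L →ₗᵢ[ℝ] EuclideanSpace ℝ (Fin q) :=
    { toLinearMap := (LinearMap.range L').subtype.comp T.toLinearMap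
      norm_map' := by
        rintro ⟨x, hx⟩
        obtain ⟨a, rfl⟩ := hx
        have : ‖(⟨L a, LinearMap.mem_range_self L a⟩ : LinearMap.range L)‖ = ‖L a‖ := rfl
        rw [this]
        show ‖(T ⟨L a, LinearMap.mem_range_self L a⟩ : EuclideanSpace ℝ (Fin q))‖ = ‖L a‖
        rw [hT a]
        exact hLnorm a }
  let g₀ : EuclideanSpace ℝ (Fin q) →ₗᵢ[ℝ] EuclideanSpace ℝ (Fin q) := σ.extend
  have hg₀ : ∀ a : Fin n → ℝ, g₀ (L a) = L' a := by
    intro a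
    have := σ.extend_apply ⟨L a, LinearMap.mem_range_self L a⟩
    rw [this]
    show ((LinearMap.range L').subtype.comp T.toLinearMap _ : EuclideanSpace ℝ (Fin q)) = L' a
    simpa using hT a
  have hsurj : Function.Surjective g₀ :=
    (LinearMap.injective_iff_surjective.1 g₀.injective)
  let g : EuclideanSpace ℝ (Fin q) ≃ₗᵢ[ℝ] EuclideanSpace ℝ (Fin q) :=
    LinearIsometryEquiv.ofSurjective g₀ hsurj
  have hg : ∀ a : Fin n → ℝ, g (L a) = L' a := fun a => hg₀ a
  have hgv : ∀ i, g (v i) = v' i := by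
    intro i
    have h1 : L (Pi.single i 1) = v i := by
      rw [hLapp]
      simp [Pi.single_apply]
    have h2 : L' (Pi.single i 1) = v' i := by
      rw [hLapp']
      simp [Pi.single_apply]
    rw [← h1, ← h2]; exact hg _
  refine ⟨((IsometryEquiv.addRight (-(z i₀))).trans g.toIsometryEquiv).trans
    (IsometryEquiv.addLeft (z' i₀)), fun i => ?_⟩
  simp only [IsometryEquiv.trans_apply, IsometryEquiv.addRight_apply,
    IsometryEquiv.addLeft_apply, LinearIsometryEquiv.coe_toIsometryEquiv]
  rw [← sub_eq_add_neg, show z i - z i₀ = v i from rfl, hgv i]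
  simp [v']

/-- From attainment of the bound, the embedding realizes `D` exactly. -/
lemma attain_realize {n q : ℕ} (hn : 2 * q + 3 < n)
    (D : Matrix (Fin n) (Fin n) ℝ) (hDsymm : D.IsSymm)
    (hDdiag : ∀ i : Fin n, D i i = 0) (hrank : D.rank ≤ q + 2)
    (z : Fin n → EuclideanSpace ℝ (Fin q))
    (hz : infoNCE (Wexp D) (SEucl z) = entropicBound (Wexp D)) :
    ∀ i j : Fin n, ‖z i - z j‖ ^ 2 = D i j := by
  have hn2 : 2 ≤ n := by omega
  have hWpos : ∀ i j : Fin n, 0 < Wexp D i j := fun i j => Real.exp_pos _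
  have h := (attains_iff hn2 (Wexp D) (SEucl z) hWpos).1 hz
  set A : Fin n → ℝ := fun i => ∑ k ∈ Finset.univ.erase i, Wexp D i k with hA
  set B : Fin n → ℝ := fun i => ∑ k ∈ Finset.univ.erase i, Real.exp (SEucl z i k) with hB
  have hne : ∀ i : Fin n, (Finset.univ.erase i).Nonempty := by
    intro i
    have : Nontrivial (Fin n) := Fin.nontrivial_iff_two_le.mpr hn2
    obtain ⟨j, hj⟩ := exists_ne i
    exact ⟨j, Finset.mem_erase.2 ⟨hj, Finset.mem_univ j⟩⟩
  have hApos : ∀ i, 0 < A i := fun i => Finset.sum_pos (fun k _ => hWpos i k) (hne i)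
  have hBpos : ∀ i, 0 < B i := fun i =>
    Finset.sum_pos (fun k _ => Real.exp_pos _) (hne i)
  set ci : Fin n → ℝ := fun i => Real.log (B i) - Real.log (A i) with hci
  have hrowc : ∀ i j : Fin n, i ≠ j → SEucl z i j + D i j = ci i := by
    intro i j hij
    have hj : j ∈ Finset.univ.erase i := Finset.mem_erase.2 ⟨hij.symm, Finset.mem_univ j⟩
    have h2 : Real.exp (SEucl z i j) * A i = Wexp D i j * B i := by
      have h1 := h i j hj
      rw [div_eq_div_iff (hBpos i).ne' (hApos i).ne'] at h1
      exact h1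
    have h3 : Real.log (Real.exp (SEucl z i j)) + Real.log (A i)
        = Real.log (Wexp D i j) + Real.log (B i) := by
      rw [← Real.log_mul (Real.exp_pos _).ne' (hApos i).ne',
        ← Real.log_mul (hWpos i j).ne' (hBpos i).ne', h2]
    rw [Real.log_exp] at h3
    have h4 : Real.log (Wexp D i j) = -(D i j) := by
      simp [Wexp]
    rw [h4] at h3
    simp only [hci]
    linarith
  have hSsymm : ∀ i j : Fin n, SEucl z j i = SEucl z i j := by
    intro i j; simp [SEucl, norm_sub_rev]
  have hDsym : ∀ i j : Fin n, D j i = D i j := by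
    intro i j
    conv_lhs => rw [← hDsymm]
    rfl
  have hcsym : ∀ i j : Fin n, i ≠ j → ci i = ci j := by
    intro i j hij
    rw [← hrowc i j hij, ← hrowc j i (Ne.symm hij), hSsymm i j, hDsym i j]
  let i₀ : Fin n := ⟨0, by omega⟩
  set c : ℝ := ci i₀ with hc
  have hconst : ∀ i j : Fin n, i ≠ j → ‖z i - z j‖ ^ 2 = D i j - c := by
    intro i j hij
    have h1 : SEucl z i j + D i j = ci i := hrowc i j hij
    have h2 : ci i = c := by
      by_cases hi : i = i₀
      · rw [hi]
      · exact hcsym i i₀ hi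
    have h3 : SEucl z i j = -‖z i - z j‖ ^ 2 := rfl
    rw [h3, h2] at h1
    linarith
  have hc0 : c = 0 := c_eq_zero hn D hDdiag hrank z c hconst
  intro i j
  by_cases hij : i = j
  · subst hij; simp [hDdiag i]
  · rw [hconst i j hij, hc0]; ring

end Aux

/-- Euclidean DGP: existence of an embedding attaining the entropic
lower bound iff `D` is realizable in `ℝ^q`; attaining embeddings realize `D` exactly
and are unique up to a Euclidean isometry. -/
theorem statement3 {n q : ℕ} (hq : 1 ≤ q) (hn : 2 * q + 3 < n)
    (D : Matrix (Fin n) (Fin n) ℝ) (hDsymm : D.IsSymm)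
    (hDnn : ∀ i j : Fin n, 0 ≤ D i j) (hDdiag : ∀ i : Fin n, D i i = 0)
    (hrank : D.rank ≤ q + 2) :
    ((∃ z : Fin n → EuclideanSpace ℝ (Fin q),
        infoNCE (Wexp D) (SEucl z) = entropicBound (Wexp D)) ↔
      (∃ p : Fin n → EuclideanSpace ℝ (Fin q), ∀ i j : Fin n, ‖p i - p j‖ ^ 2 = D i j)) ∧
    (∀ z : Fin n → EuclideanSpace ℝ (Fin q),
      infoNCE (Wexp D) (SEucl z) = entropicBound (Wexp D) →
      ∀ i j : Fin n, ‖z i - z j‖ ^ 2 = D i j) ∧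
    (∀ z z' : Fin n → EuclideanSpace ℝ (Fin q),
      infoNCE (Wexp D) (SEucl z) = entropicBound (Wexp D) →
      infoNCE (Wexp D) (SEucl z') = entropicBound (Wexp D) →
      ∃ f : EuclideanSpace ℝ (Fin q) ≃ᵢ EuclideanSpace ℝ (Fin q),
        ∀ i : Fin n, z' i = f (z i)) := by
  have hn2 : 2 ≤ n := by omega
  have hn0 : 0 < n := by omega
  refine ⟨⟨?_, ?_⟩, ?_, ?_⟩
  · rintro ⟨z, hz⟩
    exact ⟨z, attain_realize hn D hDsymm hDdiag hrank z hz⟩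
  · rintro ⟨p, hp⟩
    refine ⟨p, ?_⟩
    have hWpos : ∀ i j : Fin n, 0 < Wexp D i j := fun i j => Real.exp_pos _
    refine (attains_iff hn2 (Wexp D) (SEucl p) hWpos).2 ?_
    have heq : ∀ i j : Fin n, Real.exp (SEucl p i j) = Wexp D i j := by
      intro i j
      simp only [SEucl, Wexp, Matrix.of_apply]
      rw [hp i j]
    intro i j hj
    rw [heq i j]
    congr 1
    exact Finset.sum_congr rfl fun k _ => heq i k
  · exact fun z hz => attain_realize hn D hDsymm hDdiag hrank z hz
  · intro z z' hz hz'
    have h1 := attain_realize hn D hDsymm hDdiag hrank z hz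
    have h2 := attain_realize hn D hDsymm hDdiag hrank z' hz'
    refine exists_isometry_of_dist_eq hn0 z z' ?_
    intro i j
    have h3 : ‖z' i - z' j‖ ^ 2 = ‖z i - z j‖ ^ 2 := by rw [h1 i j, h2 i j]
    have h4 := congrArg Real.sqrt h3
    rwa [Real.sqrt_sq (norm_nonneg _), Real.sqrt_sq (norm_nonneg _)] at h4
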